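/- Let Φ = (φ₁,…,φ_l) be holomorphic on a connected open set D ⊆ ℂ with φ₁,…,φ_l algebraically independent over the field of rational functions on D. Suppose G(z,X) is a Nash algebraic function on a neighborhood of the graph {(z,Φ(z)) : z ∈ D} such that G(z,Φ(z)) ≡ 0 on D. Then G(z,X) ≡ 0 identically on a neighborhood of the graph. -/

import Mathlib

open Complex BigOperators

/-- A holomorphic function of several complex variables is Nash algebraic on `V` if it
satisfies a nontrivial polynomial identity with polynomial coefficients. -/
def NashAlgebraicOnMv {m : ℕ} (V : Set (Fin m → ℂ)) (G : (Fin m → ℂ) → ℂ) : Prop :=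
  AnalyticOn ℂ G V ∧
    ∃ P : Polynomial (MvPolynomial (Fin m) ℂ), P ≠ 0 ∧
      ∀ x ∈ V, Polynomial.eval₂ (MvPolynomial.eval x) (G x) P = 0

/-- `φ₁,…,φ_l` are algebraically independent over the rational functions on `D`:
no nonzero polynomial `Q(z, X₁,…,X_l)` satisfies `Q(z, φ₁(z),…,φ_l(z)) ≡ 0`. -/
def AlgIndepOverRat {l : ℕ} (D : Set ℂ) (Φ : ℂ → (Fin l → ℂ)) : Prop :=
  ∀ Q : MvPolynomial (Fin (l + 1)) ℂ,
    (∀ z ∈ D, MvPolynomial.eval (Fin.cons z (Φ z)) Q = 0) → Q = 0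

/-- If `G(z,X)` is Nash algebraic on a connected neighborhood `V` of the graph of
`Φ = (φ₁,…,φ_l)`, the `φ_j` are algebraically independent over the rational functions
on the connected open set `D`, and `G(z,Φ(z)) ≡ 0` on `D`, then `G ≡ 0` on `V`. -/
lemma mvpoly_analyticOnNhd {m : ℕ} (p : MvPolynomial (Fin m) ℂ) :
    AnalyticOnNhd ℂ (fun x : Fin m → ℂ => MvPolynomial.eval x p) Set.univ := by
  induction p using MvPolynomial.induction_on with
  | C a => simpa using analyticOnNhd_const
  | add p q hp hq => simpa [MvPolynomial.eval_add, Pi.add_def] using hp.add hq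
  | mul_X p i hp =>
      simpa [MvPolynomial.eval_mul] using
        hp.mul ((ContinuousLinearMap.proj i : (Fin m → ℂ) →L[ℂ] ℂ).analyticOnNhd _)

theorem nash_vanishing_on_graph (l : ℕ)
    (D : Set ℂ) (hD : IsOpen D) (hDc : IsConnected D)
    (Φ : ℂ → (Fin l → ℂ)) (hΦ : AnalyticOn ℂ Φ D)
    (hindep : AlgIndepOverRat D Φ)
    (V : Set (Fin (l + 1) → ℂ)) (hV : IsOpen V) (hVc : IsConnected V)
    (hgraph : ∀ z ∈ D, Fin.cons z (Φ z) ∈ V)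
    (G : (Fin (l + 1) → ℂ) → ℂ) (hG : NashAlgebraicOnMv V G)
    (hvanish : ∀ z ∈ D, G (Fin.cons z (Φ z)) = 0) :
    ∀ x ∈ V, G x = 0 := by
  obtain ⟨hGa, P, hP, hPeq⟩ := hG
  have hGa' : AnalyticOnNhd ℂ G V := (hV.analyticOn_iff_analyticOnNhd).mp hGa
  by_contra hcon
  push_neg at hcon
  obtain ⟨x₀, hx₀, hGx₀⟩ := hcon
  obtain ⟨Q, hPQ, hndvd⟩ := P.exists_eq_pow_rootMultiplicity_mul_and_not_dvd hP 0
  have hQ0 : Q.coeff 0 ≠ 0 := fun h => hndvd (by simpa using Polynomial.X_dvd_iff.mpr h)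
  set H : (Fin (l + 1) → ℂ) → ℂ := fun x => Polynomial.eval₂ (MvPolynomial.eval x) (G x) Q with hH
  -- H is analytic on V
  have hHa : AnalyticOnNhd ℂ H V := by
    have : H = fun x => ∑ i ∈ Finset.range (Q.natDegree + 1),
        MvPolynomial.eval x (Q.coeff i) * (G x) ^ i := by
      funext x; simp [hH, Polynomial.eval₂_eq_sum_range]
    rw [this]
    have hsum : (fun x => ∑ i ∈ Finset.range (Q.natDegree + 1),
        MvPolynomial.eval x (Q.coeff i) * (G x) ^ i) = ∑ i ∈ Finset.range (Q.natDegree + 1),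
        fun x => MvPolynomial.eval x (Q.coeff i) * (G x) ^ i := by
      ext x; simp [Finset.sum_apply]
    rw [hsum]
    apply Finset.analyticOnNhd_sum
    intro i _
    exact ((mvpoly_analyticOnNhd (Q.coeff i)).mono (Set.subset_univ V)).mul (hGa'.pow i)
  -- G^k * H = 0 on V
  have hmul : ∀ x ∈ V, (G x) ^ (P.rootMultiplicity 0) * H x = 0 := by
    intro x hx
    have := hPeq x hx
    rw [hPQ] at this
    simpa [Polynomial.eval₂_mul, Polynomial.eval₂_pow, hH] using this
  -- H vanishes near x₀
  have hHev : H =ᶠ[nhds x₀] 0 := by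
    have hcont : ContinuousAt G x₀ := (hGa' x₀ hx₀).continuousAt
    have h1 : ∀ᶠ x in nhds x₀, G x ≠ 0 := hcont.eventually_ne hGx₀
    have h2 : ∀ᶠ x in nhds x₀, x ∈ V := hV.mem_nhds hx₀
    filter_upwards [h1, h2] with x hGx hxV
    have := hmul x hxV
    have hpow : (G x) ^ (P.rootMultiplicity 0) ≠ 0 := pow_ne_zero _ hGx
    exact (mul_eq_zero.mp this).resolve_left hpow
  have hHzero : Set.EqOn H 0 V :=
    hHa.eqOn_zero_of_preconnected_of_eventuallyEq_zero hVc.isPreconnected hx₀ hHev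
  -- contradiction with algebraic independence
  have : Q.coeff 0 = 0 := by
    apply hindep
    intro z hz
    have h1 : H (Fin.cons z (Φ z)) = 0 := hHzero (hgraph z hz)
    rw [hH] at h1
    simp only [hvanish z hz, Polynomial.eval₂_at_zero] at h1
    exact h1
  exact hQ0 this
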